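/- If (X₁,…,X_n,Y₁,…,Y_n) = T_n(x₁,…,x_n,y₁,…,y_n) for the transfer map of R_{α,β}(x,y) = (y(αx+βy)/(βx+αy), x(αx+βy)/(βx+αy)), then the Jacobian determinant of T_n equals (x₁⋯x_n y₁⋯y_n)^{−1} · (−1) · (X₁⋯X_n Y₁⋯Y_n); equivalently, T_n multiplies the density 1/(x₁⋯x_n y₁⋯y_n) volume form by −1. -/

import Mathlib

open Finset

/-- First component of the Yang–Baxter map. -/
noncomputable def ufun (α β x y : ℝ) : ℝ := y * (α * x + β * y) / (β * x + α * y)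

/-- Second component of the Yang–Baxter map. -/
noncomputable def vfun (α β x y : ℝ) : ℝ := x * (α * x + β * y) / (β * x + α * y)

/-- The transfer map `T_n` on `(ℝ^n) × (ℝ^n)`. -/
noncomputable def transfer (n : ℕ) [NeZero n] (α β : ℝ) :
    (Fin n → ℝ) × (Fin n → ℝ) → (Fin n → ℝ) × (Fin n → ℝ) :=
  fun p => (fun i => ufun α β (p.1 i) (p.2 i),
            fun i => vfun α β (p.1 (i + 1)) (p.2 (i + 1)))

lemma hasFDerivAt_ufun (α β x y : ℝ) (hs : β * x + α * y ≠ 0) :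
    HasFDerivAt (fun p : ℝ × ℝ => ufun α β p.1 p.2)
      (((α^2 - β^2) * y^2 / (β*x+α*y)^2) • ContinuousLinearMap.fst ℝ ℝ ℝ
        + (β * (x*(α*x+β*y) + y*(β*x+α*y)) / (β*x+α*y)^2) • ContinuousLinearMap.snd ℝ ℝ ℝ) (x, y) := by
  have h1 : HasFDerivAt (fun p : ℝ × ℝ => p.1) (ContinuousLinearMap.fst ℝ ℝ ℝ) (x, y) := hasFDerivAt_fst
  have h2 : HasFDerivAt (fun p : ℝ × ℝ => p.2) (ContinuousLinearMap.snd ℝ ℝ ℝ) (x, y) := hasFDerivAt_snd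
  have hnum := h2.mul ((h1.const_mul α).add (h2.const_mul β))
  have hden := (h1.const_mul β).add (h2.const_mul α)
  have hinv := (hasFDerivAt_inv (𝕜 := ℝ) hs).comp (x, y) hden
  have h := hnum.mul hinv
  simp only [ufun, div_eq_mul_inv]
  refine h.congr_fderiv ?_
  apply ContinuousLinearMap.ext; intro v
  simp only [ContinuousLinearMap.add_apply, ContinuousLinearMap.smul_apply,
    ContinuousLinearMap.coe_fst', ContinuousLinearMap.coe_snd', smul_eq_mul,
    ContinuousLinearMap.coe_smul', Pi.smul_apply, ContinuousLinearMap.coe_sub',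
    Pi.sub_apply, ContinuousLinearMap.coe_comp', Function.comp_apply,
    ContinuousLinearMap.smulRight_apply, ContinuousLinearMap.one_apply,
    ContinuousLinearMap.toSpanSingleton_apply, Pi.mul_apply, Pi.add_apply]
  field_simp
  ring

lemma hasFDerivAt_vfun (α β x y : ℝ) (hs : β * x + α * y ≠ 0) :
    HasFDerivAt (fun p : ℝ × ℝ => vfun α β p.1 p.2)
      ((α * (y*(α*x+β*y) + x*(β*x+α*y)) / (β*x+α*y)^2) • ContinuousLinearMap.fst ℝ ℝ ℝ
        + ((β^2 - α^2) * x^2 / (β*x+α*y)^2) • ContinuousLinearMap.snd ℝ ℝ ℝ) (x, y) := by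
  have h1 : HasFDerivAt (fun p : ℝ × ℝ => p.1) (ContinuousLinearMap.fst ℝ ℝ ℝ) (x, y) := hasFDerivAt_fst
  have h2 : HasFDerivAt (fun p : ℝ × ℝ => p.2) (ContinuousLinearMap.snd ℝ ℝ ℝ) (x, y) := hasFDerivAt_snd
  have hnum := h1.mul ((h1.const_mul α).add (h2.const_mul β))
  have hden := (h1.const_mul β).add (h2.const_mul α)
  have hinv := (hasFDerivAt_inv (𝕜 := ℝ) hs).comp (x, y) hden
  have h := hnum.mul hinv
  simp only [vfun, div_eq_mul_inv]
  refine h.congr_fderiv ?_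
  apply ContinuousLinearMap.ext; intro v
  simp only [ContinuousLinearMap.add_apply, ContinuousLinearMap.smul_apply,
    ContinuousLinearMap.coe_fst', ContinuousLinearMap.coe_snd', smul_eq_mul,
    ContinuousLinearMap.coe_smul', Pi.smul_apply, ContinuousLinearMap.coe_sub',
    Pi.sub_apply, ContinuousLinearMap.coe_comp', Function.comp_apply,
    ContinuousLinearMap.smulRight_apply, ContinuousLinearMap.one_apply,
    ContinuousLinearMap.toSpanSingleton_apply, Pi.mul_apply, Pi.add_apply]
  field_simp
  ring

lemma det_M (m : ℕ) (a b c d : Fin (m+1) → ℝ) :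
    ((Matrix.fromBlocks (Matrix.diagonal a) (Matrix.diagonal b)
        (Matrix.diagonal c) (Matrix.diagonal d)).submatrix
        (Equiv.sumCongr (Equiv.refl (Fin (m+1))) (Equiv.addRight (1 : Fin (m+1)))) id).det
      = (-1)^m * ∏ i, (a i * d i - b i * c i) := by
  rw [Matrix.det_permute]
  have hsign : Equiv.Perm.sign
      (Equiv.sumCongr (Equiv.refl (Fin (m+1))) (Equiv.addRight (1 : Fin (m+1)))) = (-1)^m := by
    have h1 : Equiv.addRight (1 : Fin (m+1)) = finRotate (m+1) := by
      ext i
      simp [finRotate_succ_apply]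
    rw [Equiv.Perm.sign_sumCongr, h1, sign_finRotate]
    simp
  rw [hsign]
  let e : Fin 2 × Fin (m+1) ≃ (Fin (m+1)) ⊕ (Fin (m+1)) :=
    (finTwoEquiv.prodCongr (Equiv.refl (Fin (m+1)))).trans (Equiv.boolProdEquivSum (Fin (m+1)))
  have hblock : Matrix.fromBlocks (Matrix.diagonal a) (Matrix.diagonal b)
        (Matrix.diagonal c) (Matrix.diagonal d)
      = Matrix.reindex e e (Matrix.blockDiagonal (fun i => !![a i, b i; c i, d i])) := by
    ext i j
    have hsymm : ∀ k : Fin (m+1), e.symm (Sum.inl k) = (0, k) ∧ e.symm (Sum.inr k) = (1, k) := by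
      intro k; constructor <;> rfl
    rcases i with i | i <;> rcases j with j | j <;>
      simp [e, Matrix.blockDiagonal_apply, Matrix.diagonal_apply, (hsymm _).1, (hsymm _).2,
        show finTwoEquiv.symm false = 0 from rfl, show finTwoEquiv.symm true = 1 from rfl,
        Matrix.reindex_apply, Matrix.submatrix_apply]
  rw [hblock, Matrix.det_reindex_self, Matrix.det_blockDiagonal]
  simp [Matrix.det_fin_two_of]

/-- The transfer map multiplies the density `1/(x₁⋯x_n y₁⋯y_n)` volume form by `−1`:
its Jacobian determinant times `(X₁⋯X_n Y₁⋯Y_n)⁻¹` equals `−(x₁⋯x_n y₁⋯y_n)⁻¹`. -/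
theorem transfer_jacobian (n : ℕ) [NeZero n] (α β : ℝ) (x y : Fin n → ℝ)
    (hα : 0 < α) (hβ : 0 < β) (hx : ∀ i, 0 < x i) (hy : ∀ i, 0 < y i) :
    LinearMap.det ((fderiv ℝ (transfer n α β) (x, y)).toLinearMap) *
      ((∏ i, (transfer n α β (x, y)).1 i) * ∏ i, (transfer n α β (x, y)).2 i)⁻¹ =
    -((∏ i, x i) * ∏ i, y i)⁻¹ := by
  obtain ⟨m, rfl⟩ := Nat.exists_eq_succ_of_ne_zero (NeZero.ne n)
  have hs : ∀ i, (0:ℝ) < β * x i + α * y i :=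
    fun i => add_pos (mul_pos hβ (hx i)) (mul_pos hα (hy i))
  have hs' : ∀ i, β * x i + α * y i ≠ 0 := fun i => (hs i).ne'
  set a : Fin (m+1) → ℝ := fun i => (α^2 - β^2) * (y i)^2 / (β * x i + α * y i)^2 with ha
  set b : Fin (m+1) → ℝ :=
    fun i => β * (x i * (α * x i + β * y i) + y i * (β * x i + α * y i)) / (β * x i + α * y i)^2 with hb
  set c : Fin (m+1) → ℝ :=
    fun i => α * (y i * (α * x i + β * y i) + x i * (β * x i + α * y i)) / (β * x i + α * y i)^2 with hc
  set d : Fin (m+1) → ℝ := fun i => (β^2 - α^2) * (x i)^2 / (β * x i + α * y i)^2 with hd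
  set Du : Fin (m+1) → (ℝ × ℝ →L[ℝ] ℝ) :=
    fun i => a i • ContinuousLinearMap.fst ℝ ℝ ℝ + b i • ContinuousLinearMap.snd ℝ ℝ ℝ with hDu
  set Dv : Fin (m+1) → (ℝ × ℝ →L[ℝ] ℝ) :=
    fun i => c i • ContinuousLinearMap.fst ℝ ℝ ℝ + d i • ContinuousLinearMap.snd ℝ ℝ ℝ with hDv
  set g : Fin (m+1) → (((Fin (m+1) → ℝ) × (Fin (m+1) → ℝ)) →L[ℝ] ℝ × ℝ) := fun i =>
    ((ContinuousLinearMap.proj i).comp (ContinuousLinearMap.fst ℝ _ _)).prod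
      ((ContinuousLinearMap.proj i).comp (ContinuousLinearMap.snd ℝ _ _)) with hg
  set L := (ContinuousLinearMap.pi (fun i => (Du i).comp (g i))).prod
      (ContinuousLinearMap.pi (fun i => (Dv (i+1)).comp (g (i+1)))) with hLdef
  have hL : HasFDerivAt (transfer (m+1) α β) L (x, y) := by
    refine HasFDerivAt.prodMk (hasFDerivAt_pi.2 fun i => ?_) (hasFDerivAt_pi.2 fun i => ?_)
    · exact (hasFDerivAt_ufun α β (x i) (y i) (hs' i)).comp (x, y) ((g i).hasFDerivAt)
    · exact (hasFDerivAt_vfun α β (x (i+1)) (y (i+1)) (hs' (i+1))).comp (x, y) ((g (i+1)).hasFDerivAt)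
  rw [hL.fderiv]
  have hdet : LinearMap.det (L.toLinearMap) = (-1)^m * ∏ i, (a i * d i - b i * c i) := by
    set bb := (Pi.basisFun ℝ (Fin (m+1))).prod (Pi.basisFun ℝ (Fin (m+1))) with hbb
    rw [← LinearMap.det_toMatrix bb]
    have hmat : LinearMap.toMatrix bb bb L.toLinearMap =
        (Matrix.fromBlocks (Matrix.diagonal a) (Matrix.diagonal b)
          (Matrix.diagonal c) (Matrix.diagonal d)).submatrix
          (Equiv.sumCongr (Equiv.refl (Fin (m+1))) (Equiv.addRight (1 : Fin (m+1)))) id := by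
      ext i j
      rcases i with i | i <;> rcases j with j | j <;>
        simp [LinearMap.toMatrix_apply, hbb, hLdef, hDu, hDv, hg, Module.Basis.prod_apply,
          Pi.basisFun_apply, Pi.single_apply, Matrix.diagonal_apply, Module.Basis.prod_repr_inl,
          Module.Basis.prod_repr_inr, Pi.basisFun_repr, Matrix.submatrix_apply,
          Matrix.fromBlocks_apply₁₁, Matrix.fromBlocks_apply₁₂, Matrix.fromBlocks_apply₂₁,
          Matrix.fromBlocks_apply₂₂, mul_comm, eq_comm] <;>
        split <;> simp_all
    rw [hmat, det_M]
  rw [hdet]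
  have hu : ∀ i, 0 < ufun α β (x i) (y i) := fun i =>
    div_pos (mul_pos (hy i) (add_pos (mul_pos hα (hx i)) (mul_pos hβ (hy i)))) (hs i)
  have hv : ∀ i, 0 < vfun α β (x i) (y i) := fun i =>
    div_pos (mul_pos (hx i) (add_pos (mul_pos hα (hx i)) (mul_pos hβ (hy i)))) (hs i)
  have key : ∀ i, a i * d i - b i * c i
      = -(ufun α β (x i) (y i) * vfun α β (x i) (y i)) / (x i * y i) := by
    intro i
    have h1 := (hx i).ne'
    have h2 := (hy i).ne'
    have h3 := hs' i
    simp only [ha, hb, hc, hd, ufun, vfun]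
    field_simp
    ring
  have hT1 : ∀ i, (transfer (m+1) α β (x, y)).1 i = ufun α β (x i) (y i) := fun i => rfl
  have hT2 : ∏ i, (transfer (m+1) α β (x, y)).2 i = ∏ i, vfun α β (x i) (y i) := by
    show ∏ i, vfun α β (x (i+1)) (y (i+1)) = _
    exact Equiv.prod_comp (Equiv.addRight 1) (fun j => vfun α β (x j) (y j))
  simp only [hT1, hT2]
  have hprod : ∏ i, (a i * d i - b i * c i)
      = (-1)^(m+1) * (((∏ i, ufun α β (x i) (y i)) * ∏ i, vfun α β (x i) (y i))
          / ((∏ i, x i) * ∏ i, y i)) := by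
    rw [Finset.prod_congr rfl fun i _ => key i]
    rw [show (fun i => -(ufun α β (x i) (y i) * vfun α β (x i) (y i)) / (x i * y i)) =
        (fun i => (-1) * ((ufun α β (x i) (y i) * vfun α β (x i) (y i)) / (x i * y i))) from
        funext fun i => by ring]
    rw [Finset.prod_mul_distrib, Finset.prod_const, Finset.prod_div_distrib,
      Finset.prod_mul_distrib, Finset.prod_mul_distrib]
    simp [Finset.card_univ]
  rw [hprod]
  have hPQ : (∏ i, ufun α β (x i) (y i)) * ∏ i, vfun α β (x i) (y i) ≠ 0 :=
    mul_ne_zero (Finset.prod_pos (fun i _ => hu i)).ne' (Finset.prod_pos (fun i _ => hv i)).ne'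
  have hXY : (∏ i, x i) * ∏ i, y i ≠ 0 :=
    mul_ne_zero (Finset.prod_pos (fun i _ => hx i)).ne' (Finset.prod_pos (fun i _ => hy i)).ne'
  have hsgn : ((-1:ℝ))^m * (-1)^(m+1) = -1 := by
    rw [← pow_add]
    exact Odd.neg_one_pow ⟨m, by ring⟩
  set P := (∏ i, ufun α β (x i) (y i)) * ∏ i, vfun α β (x i) (y i) with hP
  set X := (∏ i, x i) * ∏ i, y i with hX
  have hfin : P / X * P⁻¹ = X⁻¹ := by
    rw [div_mul_eq_mul_div, mul_inv_cancel₀ hPQ, one_div]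
  calc (-1:ℝ)^m * ((-1)^(m+1) * (P / X)) * P⁻¹
      = ((-1)^m * (-1)^(m+1)) * (P / X * P⁻¹) := by ring
    _ = -1 * X⁻¹ := by rw [hsgn, hfin]
    _ = -X⁻¹ := by ring
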